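/- Let p be an odd prime, K a field containing a primitive p-th root of unity ζ, and t ∈ K. Let B = K[x, y]/(y² − x(x^{2p} + t·x^p + 1)) and let A be the localization of B at the multiplicative set generated by the images of x and y. Let ζ̂ be the K-algebra automorphism of A determined by ζ̂(x) = ζ·x and ζ̂(y) = ζ^{(p+1)/2}·y. For each integer j with 0 ≤ j ≤ (p−3)/2, set ω_j := (x^j − x^{p−1−j})·y⁻¹·dx, an element of the module of Kähler differentials Ω_{A/K}. Then for every such j one has (ζ̂* + (ζ̂⁻¹)*)(ω_j) = (ζ^{(p+1)/2−j−1} + ζ^{−((p+1)/2−j−1)})·ω_j in Ω_{A/K}. -/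

import Mathlib

/-!
Statement 4 (Tautz–Top–Verberkmoes, eigenvalue computation for `ζ̂* + (ζ̂⁻¹)*` on the
differentials `ω_j` of the curve `D_t : y² = x(x^{2p} + t·x^p + 1)`).
-/

set_option synthInstance.maxHeartbeats 1000000
set_option maxHeartbeats 2000000

noncomputable section

open MvPolynomial

/-- The defining polynomial `y² − x·(x^{2p} + t·x^p + 1)` in `K[x,y]`,
where `x = X 0` and `y = X 1`. -/
def hyperRel (p : ℕ) (K : Type*) [Field K] (t : K) : MvPolynomial (Fin 2) K :=
  (X 1) ^ 2 - X 0 * ((X 0) ^ (2 * p) + C t * (X 0) ^ p + 1)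

/-- `B = K[x,y]/(y² − x(x^{2p} + t·x^p + 1))`. -/
abbrev CurveRing (p : ℕ) (K : Type*) [Field K] (t : K) :=
  MvPolynomial (Fin 2) K ⧸ Ideal.span {hyperRel p K t}

/-- The image of `x` in `B`. -/
def xB (p : ℕ) (K : Type*) [Field K] (t : K) : CurveRing p K t :=
  Ideal.Quotient.mk (Ideal.span {hyperRel p K t}) (X 0)

/-- The image of `y` in `B`. -/
def yB (p : ℕ) (K : Type*) [Field K] (t : K) : CurveRing p K t :=
  Ideal.Quotient.mk (Ideal.span {hyperRel p K t}) (X 1)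

/-- `A`, the localization of `B` at the multiplicative set generated by `x` and `y`. -/
abbrev CurveLoc (p : ℕ) (K : Type*) [Field K] (t : K) :=
  Localization (Submonoid.closure {xB p K t, yB p K t})

/-- The image of `x` in `A`. -/
def xA (p : ℕ) (K : Type*) [Field K] (t : K) : CurveLoc p K t :=
  algebraMap (CurveRing p K t) (CurveLoc p K t) (xB p K t)

/-- The image of `y` in `A`. -/
def yA (p : ℕ) (K : Type*) [Field K] (t : K) : CurveLoc p K t :=
  algebraMap (CurveRing p K t) (CurveLoc p K t) (yB p K t)

/-- The differential `ω_j = (x^j − x^{p−1−j})·y⁻¹·dx` in `Ω_{A/K}`.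
(`y` is a unit in `A`, and `Ring.inverse` produces its inverse.) -/
def omegaJ (p : ℕ) (K : Type*) [Field K] (t : K) (j : ℕ) :
    Ω[CurveLoc p K t⁄K] :=
  (((xA p K t) ^ j - (xA p K t) ^ (p - 1 - j)) * Ring.inverse (yA p K t)) •
    (KaehlerDifferential.D K (CurveLoc p K t)) (xA p K t)

instance (priority := 1100) (p : ℕ) (K : Type*) [Field K] (t : K) :
    IsCancelAdd (CurveLoc p K t) where
  add_left_cancel a b c h :=
    (neg_add_cancel_left a b).symm.trans ((congrArg (-a + ·) h).trans (neg_add_cancel_left a c))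
  add_right_cancel a b c h :=
    (add_neg_cancel_right b a).symm.trans ((congrArg (· + -a) h).trans (add_neg_cancel_right c a))

namespace TTVPullback

variable {R A : Type*} [CommRing R] [CommRing A] [Algebra R A]

/-- Type synonym for `Ω[A⁄R]` with the `A`-module structure twisted by `φ`. -/
def TwistOmega (R A : Type*) [CommRing R] [CommRing A] [Algebra R A]
    (_φ : A →ₐ[R] A) := Ω[A⁄R]

variable (φ : A →ₐ[R] A)

instance : AddCommGroup (TwistOmega R A φ) :=
  inferInstanceAs (AddCommGroup (Ω[A⁄R]))

instance : Module R (TwistOmega R A φ) :=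
  inferInstanceAs (Module R (Ω[A⁄R]))

instance : Module A (TwistOmega R A φ) :=
  Module.compHom (Ω[A⁄R]) (φ : A →+* A)

instance : IsScalarTower R A (TwistOmega R A φ) := by
  constructor
  intro r a m
  show φ (r • a) • (show Ω[A⁄R] from m) = r • (φ a • (show Ω[A⁄R] from m))
  rw [Algebra.smul_def, map_mul, AlgHom.commutes, mul_smul, algebraMap_smul]

/-- The derivation `a ↦ d(φ a)` into the twisted module. -/
def twistDeriv : Derivation R A (TwistOmega R A φ) where
  toFun a := show TwistOmega R A φ from (KaehlerDifferential.D R A) (φ a)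
  map_add' a b := by
    show (KaehlerDifferential.D R A) (φ (a + b)) = _
    rw [map_add, map_add]
    rfl
  map_smul' r a := by
    show (KaehlerDifferential.D R A) (φ (r • a)) = r • (KaehlerDifferential.D R A) (φ a)
    rw [Algebra.smul_def, map_mul, AlgHom.commutes, ← Algebra.smul_def, Derivation.map_smul]
  map_one_eq_zero' := by
    show (KaehlerDifferential.D R A) (φ 1) = 0
    rw [map_one, Derivation.map_one_eq_zero]
  leibniz' a b := by
    show (KaehlerDifferential.D R A) (φ (a * b)) =
      φ a • (KaehlerDifferential.D R A) (φ b) + φ b • (KaehlerDifferential.D R A) (φ a)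
    rw [map_mul, Derivation.leibniz]

/-- The pullback `φ*` on Kähler differentials, as an additive map. -/
def pullbackOmega : Ω[A⁄R] →+ Ω[A⁄R] :=
  ((twistDeriv φ).liftKaehlerDifferential :
    Ω[A⁄R] →ₗ[A] TwistOmega R A φ).toAddMonoidHom

lemma pullbackOmega_spec (r s : A) :
    pullbackOmega φ (r • (KaehlerDifferential.D R A) s) =
      φ r • (KaehlerDifferential.D R A) (φ s) := by
  have h1 := (twistDeriv φ).liftKaehlerDifferential.map_smul r
    ((KaehlerDifferential.D R A) s)
  have h2 := (twistDeriv φ).liftKaehlerDifferential_comp_D s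
  show ((twistDeriv φ).liftKaehlerDifferential) (r • (KaehlerDifferential.D R A) s) = _
  rw [h1, h2]
  rfl

end TTVPullback

/-- Let `p` be an odd prime, `ζ ∈ K` a primitive `p`-th root of unity, `t ∈ K`,
and let `ζ̂` be the `K`-algebra automorphism of `A` with `ζ̂(x) = ζ·x`,
`ζ̂(y) = ζ^((p+1)/2)·y`.  For `0 ≤ j ≤ (p−3)/2`, the pullback maps `ζ̂*` and `(ζ̂⁻¹)*` on
Kähler differentials (the additive maps characterized by `φ*(r·ds) = φ(r)·d(φ(s))`, which
exist) satisfy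
`(ζ̂* + (ζ̂⁻¹)*)(ω_j) = (ζ^((p+1)/2−j−1) + ζ^(−((p+1)/2−j−1)))·ω_j`. -/
theorem tautz_top_verberkmoes_eigenvalue
    (p : ℕ) (hp : p.Prime) (hodd : Odd p)
    (K : Type*) [Field K] (ζ : K) (hζ : IsPrimitiveRoot ζ p) (t : K)
    (zhat : CurveLoc p K t ≃ₐ[K] CurveLoc p K t)
    (hzx : zhat (xA p K t) = algebraMap K (CurveLoc p K t) ζ * xA p K t)
    (hzy : zhat (yA p K t) =
      algebraMap K (CurveLoc p K t) ζ ^ ((p + 1) / 2) * yA p K t)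
    (j : ℕ) (hj : j ≤ (p - 3) / 2) :
    -- the pullback map `ζ̂*` exists (and likewise for `ζ̂⁻¹` in place of `ζ̂`) …
    (∃ T : Ω[CurveLoc p K t⁄K] →+ Ω[CurveLoc p K t⁄K],
        ∀ r s : CurveLoc p K t,
          T (r • (KaehlerDifferential.D K (CurveLoc p K t)) s) =
            zhat r • (KaehlerDifferential.D K (CurveLoc p K t)) (zhat s)) ∧
    -- … and for any maps `T = ζ̂*` and `T' = (ζ̂⁻¹)*` so characterized, the asserted
    -- eigenvalue identity holds:
    (∀ T T' : Ω[CurveLoc p K t⁄K] →+ Ω[CurveLoc p K t⁄K],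
        (∀ r s : CurveLoc p K t,
          T (r • (KaehlerDifferential.D K (CurveLoc p K t)) s) =
            zhat r • (KaehlerDifferential.D K (CurveLoc p K t)) (zhat s)) →
        (∀ r s : CurveLoc p K t,
          T' (r • (KaehlerDifferential.D K (CurveLoc p K t)) s) =
            zhat.symm r • (KaehlerDifferential.D K (CurveLoc p K t)) (zhat.symm s)) →
        T (omegaJ p K t j) + T' (omegaJ p K t j) =
          algebraMap K (CurveLoc p K t)
              (ζ ^ ((p + 1) / 2 - j - 1) + ζ⁻¹ ^ ((p + 1) / 2 - j - 1)) •
            omegaJ p K t j) := by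
  constructor
  · refine ⟨TTVPullback.pullbackOmega zhat.toAlgHom, ?_⟩
    intro r s
    have h := TTVPullback.pullbackOmega_spec zhat.toAlgHom r s
    exact h
  intro T T' hT hT'
  -- notation
  set c : K →+* CurveLoc p K t := (algebraMap K (CurveLoc p K t)) with hc
  set x : CurveLoc p K t := xA p K t with hxdef
  set y : CurveLoc p K t := yA p K t with hydef
  set Dd := KaehlerDifferential.D K (CurveLoc p K t) with hDd
  set Riy : CurveLoc p K t := Ring.inverse (yA p K t) with hRiy
  -- numerology
  obtain ⟨k, hk⟩ := hodd
  have hk1 : 1 ≤ k := by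
    have := hp.two_le; omega
  have hjk : j + 1 ≤ k := by
    have h3 : (p - 3) / 2 = k - 1 := by omega
    omega
  set m : ℕ := (p + 1) / 2 with hm
  set N : ℕ := (p + 1) / 2 - j - 1 with hN
  have hmk : m = k + 1 := by omega
  have hNk : m = j + N + 1 := by omega
  have hq : p - 1 - j = j + 2 * N := by omega
  set q : ℕ := p - 1 - j with hqdef
  -- nonvanishing of ζ
  have hζ0 : ζ ≠ 0 := by
    intro h
    have := hζ.pow_eq_one
    rw [h, zero_pow hp.ne_zero] at this
    exact zero_ne_one this
  -- y is a unit in A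
  have hyu : IsUnit y := by
    have hmem : yB p K t ∈ Submonoid.closure {xB p K t, yB p K t} :=
      Submonoid.subset_closure (Set.mem_insert_iff.mpr (Or.inr rfl))
    exact IsLocalization.map_units (CurveLoc p K t)
      (⟨yB p K t, hmem⟩ : Submonoid.closure {xB p K t, yB p K t})
  have hyRiy : y * Riy = 1 := Ring.mul_inverse_cancel _ hyu
  -- inverse of ζ in A
  have hcc : c ζ⁻¹ * c ζ = 1 := by
    rw [← map_mul, inv_mul_cancel₀ hζ0, map_one]
  -- values of zhat.symm
  have hsx : zhat.symm x = c ζ⁻¹ * x := by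
    have h := congrArg zhat.symm hzx
    rw [AlgEquiv.symm_apply_apply, map_mul, AlgEquiv.commutes] at h
    calc zhat.symm x = (c ζ⁻¹ * c ζ) * zhat.symm x := by rw [hcc, one_mul]
    _ = c ζ⁻¹ * (c ζ * zhat.symm x) := by ring
    _ = c ζ⁻¹ * x := by rw [← h]
  have hsy : zhat.symm y = (c ζ⁻¹) ^ m * y := by
    have h := congrArg zhat.symm hzy
    rw [AlgEquiv.symm_apply_apply, map_mul, map_pow, AlgEquiv.commutes] at h
    calc zhat.symm y = ((c ζ⁻¹) ^ m * (c ζ) ^ m) * zhat.symm y := by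
          rw [← mul_pow, hcc, one_pow, one_mul]
    _ = (c ζ⁻¹) ^ m * ((c ζ) ^ m * zhat.symm y) := by ring
    _ = (c ζ⁻¹) ^ m * y := by rw [← h]
  -- images of Riy
  have hinv : ∀ (ψ : CurveLoc p K t ≃ₐ[K] CurveLoc p K t) (α β : K),
      α * β = 1 → ψ y = (c α) ^ m * y → ψ Riy = (c β) ^ m * Riy := by
    intro ψ α β hαβ hψ
    have hu : IsUnit (ψ y) := hyu.map ψ
    have h1 : ψ y * ψ Riy = 1 := by
      rw [← map_mul, hyRiy, map_one]
    have h2 : ψ y * ((c β) ^ m * Riy) = 1 := by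
      rw [hψ, mul_mul_mul_comm, ← mul_pow, ← map_mul, hαβ, map_one, one_pow,
        hyRiy, one_mul]
    exact hu.mul_left_cancel (h1.trans h2.symm)
  have hzRiy : zhat Riy = (c ζ⁻¹) ^ m * Riy :=
    hinv zhat ζ ζ⁻¹ (mul_inv_cancel₀ hζ0) hzy
  have hsRiy : zhat.symm Riy = (c ζ) ^ m * Riy :=
    hinv zhat.symm ζ⁻¹ ζ (inv_mul_cancel₀ hζ0) hsy
  -- derivative computations
  have hDzx : Dd (zhat x) = (c ζ) • Dd x := by
    rw [hzx, Derivation.leibniz, Derivation.map_algebraMap, smul_zero, add_zero]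
  have hDsx : Dd (zhat.symm x) = (c ζ⁻¹) • Dd x := by
    rw [hsx, Derivation.leibniz, Derivation.map_algebraMap, smul_zero, add_zero]
  -- f
  set f : CurveLoc p K t := (x ^ j - x ^ q) * Riy with hf
  have homega : omegaJ p K t j = f • Dd x := rfl
  -- images of f
  have hzf : zhat f = ((c ζ) ^ j * x ^ j - (c ζ) ^ q * x ^ q) * ((c ζ⁻¹) ^ m * Riy) := by
    rw [hf, map_mul, map_sub, map_pow, map_pow, hzx, hzRiy, mul_pow, mul_pow]
  have hsf : zhat.symm f =
      ((c ζ⁻¹) ^ j * x ^ j - (c ζ⁻¹) ^ q * x ^ q) * ((c ζ) ^ m * Riy) := by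
    rw [hf, map_mul, map_sub, map_pow, map_pow, hsx, hsRiy, mul_pow, mul_pow]
  -- action of T and T'
  have hTω : T (omegaJ p K t j) = (zhat f * c ζ) • Dd x := by
    rw [homega, hT, hDzx, smul_smul]
  have hT'ω : T' (omegaJ p K t j) = (zhat.symm f * c ζ⁻¹) • Dd x := by
    rw [homega, hT', hDsx, smul_smul]
  -- the scalar identities in K
  have key1 : ζ ^ j * ζ⁻¹ ^ m * ζ + ζ⁻¹ ^ j * ζ ^ m * ζ⁻¹ = ζ ^ N + ζ⁻¹ ^ N := by
    rw [hNk]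
    have hw : ζ * ζ⁻¹ = 1 := mul_inv_cancel₀ hζ0
    calc _ = (ζ * ζ⁻¹) ^ (j + 1) * ζ⁻¹ ^ N + (ζ * ζ⁻¹) ^ (j + 1) * ζ ^ N := by ring
    _ = _ := by rw [hw, one_pow, one_mul, one_mul, add_comm]
  have key2 : ζ ^ q * ζ⁻¹ ^ m * ζ + ζ⁻¹ ^ q * ζ ^ m * ζ⁻¹ = ζ ^ N + ζ⁻¹ ^ N := by
    rw [hNk, hq]
    have hw : ζ * ζ⁻¹ = 1 := mul_inv_cancel₀ hζ0
    calc _ = (ζ * ζ⁻¹) ^ (j + N + 1) * ζ ^ N + (ζ * ζ⁻¹) ^ (j + N + 1) * ζ⁻¹ ^ N := by ring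
    _ = _ := by rw [hw, one_pow, one_mul, one_mul]
  -- map them through c
  have h1 : (c ζ) ^ j * (c ζ⁻¹) ^ m * c ζ + (c ζ⁻¹) ^ j * (c ζ) ^ m * c ζ⁻¹ =
      (c ζ) ^ N + (c ζ⁻¹) ^ N := by
    have := congrArg c key1
    simpa only [map_add, map_mul, map_pow] using this
  have h2 : (c ζ) ^ q * (c ζ⁻¹) ^ m * c ζ + (c ζ⁻¹) ^ q * (c ζ) ^ m * c ζ⁻¹ =
      (c ζ) ^ N + (c ζ⁻¹) ^ N := by
    have := congrArg c key2
    simpa only [map_add, map_mul, map_pow] using this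
  -- the main ring identity
  have hkey : zhat f * c ζ + zhat.symm f * c ζ⁻¹ = c (ζ ^ N + ζ⁻¹ ^ N) * f := by
    rw [hzf, hsf, hf, map_add, map_pow, map_pow]
    linear_combination (x ^ j * Riy) * h1 - (x ^ q * Riy) * h2
  -- assemble
  rw [hTω, hT'ω, ← add_smul, hkey, homega, smul_smul]
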